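/- arXiv:2504.05048 — 2 statements merged into one kernel-verified Lean document; each statement's English description precedes it below -/
import Mathlib

section
/- Let a_1,…,a_l and ā_1,…,ā_l be complex numbers. Then ln(1 + Σ_{i=1}^l |a_i|^2) ≥ ln(1 + Σ_{i=1}^l |ā_i|^2) − Σ_{i=1}^l |ā_i|^2 + 2·Σ_{i=1}^l Re(conj(ā_i)·a_i) − (Σ_{i=1}^l |ā_i|^2)·(1 + Σ_{i=1}^l |a_i|^2)/(1 + Σ_{i=1}^l |ā_i|^2). -/
theorem stmt_2 (l : ℕ) (a abar : Fin l → ℂ) :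
    Real.log (1 + ∑ i, ‖a i‖ ^ 2) ≥
      Real.log (1 + ∑ i, ‖abar i‖ ^ 2)
        - (∑ i, ‖abar i‖ ^ 2)
        + 2 * ∑ i, ((starRingEnd ℂ) (abar i) * a i).re
        - (∑ i, ‖abar i‖ ^ 2) * (1 + ∑ i, ‖a i‖ ^ 2)
            / (1 + ∑ i, ‖abar i‖ ^ 2) := by
  set A := ∑ i, ‖a i‖ ^ 2 with hAdef
  set B := ∑ i, ‖abar i‖ ^ 2 with hBdef
  set C := ∑ i, ((starRingEnd ℂ) (abar i) * a i).re with hCdef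
  have hA0 : 0 ≤ A := Finset.sum_nonneg fun i _ => by positivity
  have hB0 : 0 ≤ B := Finset.sum_nonneg fun i _ => by positivity
  have hD : (0:ℝ) < 1 + A := by linarith
  have hE : (0:ℝ) < 1 + B := by linarith
  set s : ℝ := (1 + B) / (1 + A) with hsdef
  have hs : 0 < s := div_pos hE hD
  -- termwise bound: 2*s*Re(conj ā * a) ≤ s²|a|² + |ā|²
  have key : 2 * s * C ≤ s ^ 2 * A + B := by
    have hterm : ∀ i ∈ Finset.univ (α := Fin l),
        2 * s * ((starRingEnd ℂ) (abar i) * a i).re ≤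
          s ^ 2 * ‖a i‖ ^ 2 + ‖abar i‖ ^ 2 := by
      intro i _
      have h1 : ((starRingEnd ℂ) (abar i) * a i).re ≤
          ‖abar i‖ * ‖a i‖ := by
        calc ((starRingEnd ℂ) (abar i) * a i).re
            ≤ ‖(starRingEnd ℂ) (abar i) * a i‖ := Complex.re_le_norm _
          _ = ‖abar i‖ * ‖a i‖ := by
              rw [norm_mul, Complex.norm_conj]
      nlinarith [sq_nonneg (s * ‖a i‖ - ‖abar i‖), hs,
        norm_nonneg (a i), norm_nonneg (abar i)]
    calc 2 * s * C = ∑ i, 2 * s * ((starRingEnd ℂ) (abar i) * a i).re := by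
          rw [hCdef, Finset.mul_sum]
      _ ≤ ∑ i, (s ^ 2 * ‖a i‖ ^ 2 + ‖abar i‖ ^ 2) :=
          Finset.sum_le_sum hterm
      _ = s ^ 2 * A + B := by
          rw [Finset.sum_add_distrib, hAdef, Finset.mul_sum]
  have hs1 : s * (1 + A) = 1 + B := by
    rw [hsdef]; field_simp
  have hBs : B / s = B * (1 + A) / (1 + B) := by
    rw [hsdef]; field_simp
  have h2C : 2 * C ≤ s * A + B / s := by
    have hBss : B / s * s = B := div_mul_cancel₀ B (ne_of_gt hs)
    nlinarith [key, hs, hBss]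
  have hlog : Real.log (1 + B) + 1 - s ≤ Real.log (1 + A) := by
    have h := Real.log_le_sub_one_of_pos hs
    rw [hsdef, Real.log_div (ne_of_gt hE) (ne_of_gt hD)] at h
    rw [hsdef]; linarith
  have hsA : s * A = 1 + B - s := by nlinarith [hs1]
  rw [ge_iff_le]
  calc Real.log (1 + B) - B + 2 * C - B * (1 + A) / (1 + B)
      ≤ Real.log (1 + B) - B + (s * A + B / s) - B * (1 + A) / (1 + B) := by linarith
    _ = Real.log (1 + B) + 1 - s := by rw [hBs, hsA]; ring
    _ ≤ Real.log (1 + A) := hlog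
end

section
/- Nemirovski's Lemma (sufficiency direction): Let R be a Hermitian matrix and E, F, Z matrices of compatible dimensions, and t > 0 a scalar. If there exists α ≥ 0 such that the block matrix [[R − α·FᴴF, −t·Eᴴ],[−t·E, α·I]] is positive semidefinite, then R ⪰ Eᴴ Z F + Fᴴ Zᴴ E for every Z with spectral norm ‖Z‖ ≤ t. -/
open Matrix ComplexOrder

private lemma adj_dot {a b : ℕ} (A : Matrix (Fin a) (Fin b) ℂ) (x : Fin b → ℂ)
    (y : Fin a → ℂ) : star (A *ᵥ x) ⬝ᵥ y = star x ⬝ᵥ (Aᴴ *ᵥ y) := by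
  rw [star_mulVec, ← dotProduct_mulVec]

private lemma star_sum_elim {a b : ℕ} (x : Fin a → ℂ) (u : Fin b → ℂ) :
    star (Sum.elim x u) = Sum.elim (star x) (star u) := by
  funext i; cases i <;> rfl

open Matrix ComplexOrder in
theorem stmt_16 {n p q : ℕ} (R : Matrix (Fin n) (Fin n) ℂ) (hR : R.IsHermitian)
    (E : Matrix (Fin p) (Fin n) ℂ) (F : Matrix (Fin q) (Fin n) ℂ) (t : ℝ) (ht : 0 < t)
    (hsuff : ∃ α : ℝ, 0 ≤ α ∧
      (Matrix.fromBlocks (R - (α : ℂ) • (Fᴴ * F)) (-(t : ℂ) • Eᴴ)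
        (-(t : ℂ) • E) ((α : ℂ) • (1 : Matrix (Fin p) (Fin p) ℂ))).PosSemidef) :
    ∀ Z : Matrix (Fin p) (Fin q) ℂ,
      (((t : ℂ) ^ 2 • (1 : Matrix (Fin q) (Fin q) ℂ)) - Zᴴ * Z).PosSemidef →
      (R - (Eᴴ * Z * F + Fᴴ * Zᴴ * E)).PosSemidef := by
  obtain ⟨α, hα, hM⟩ := hsuff
  intro Z hZ
  have htc : (t : ℂ) ≠ 0 := by exact_mod_cast ht.ne'
  rw [posSemidef_iff_dotProduct_mulVec]
  constructor
  · show _ = _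
    simp only [conjTranspose_sub, conjTranspose_add, conjTranspose_mul,
      conjTranspose_conjTranspose, hR.eq, Matrix.mul_assoc]
    rw [add_comm (Fᴴ * (Zᴴ * E))]
  · intro x
    set u : Fin p → ℂ := (t : ℂ)⁻¹ • (Z *ᵥ (F *ᵥ x)) with hu
    have h1 := hM.dotProduct_mulVec_nonneg (Sum.elim x u)
    have h2 := hZ.dotProduct_mulVec_nonneg (F *ᵥ x)
    have hc : (0 : ℂ) ≤ ((α : ℂ) * (t : ℂ)⁻¹ * (t : ℂ)⁻¹) := by
      have : ((α : ℂ) * (t : ℂ)⁻¹ * (t : ℂ)⁻¹) = ((α * t⁻¹ * t⁻¹ : ℝ) : ℂ) := by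
        push_cast; ring
      rw [this]
      exact_mod_cast mul_nonneg (mul_nonneg hα (inv_nonneg.2 ht.le)) (inv_nonneg.2 ht.le)
    simp only [hu, fromBlocks_mulVec, Sum.elim_comp_inl, Sum.elim_comp_inr, star_sum_elim, sumElim_dotProduct_sumElim,
      sub_mulVec, add_mulVec, smul_mulVec, one_mulVec, mulVec_smul,
      star_smul, smul_dotProduct, dotProduct_smul, dotProduct_add, dotProduct_sub,
      ← mulVec_mulVec, adj_dot, conjTranspose_conjTranspose,
      star_inv₀, RCLike.star_def, map_inv₀, Complex.conj_ofReal, neg_smul, neg_mulVec,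
      dotProduct_neg, smul_smul] at h1 h2 ⊢
    refine le_of_le_of_eq (add_nonneg h1 (mul_nonneg hc h2)) ?_
    simp only [smul_eq_mul]
    field_simp
    ring
end
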